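/- The group homomorphism from the presented group ⟨x, y, z | x², y², z², (xy)^p, (yz)^q, (zx)²⟩ to GL(3, ℝ) determined by sending x ↦ σx, y ↦ σy, z ↦ σz is injective; that is, the geometric representation of the triangle group Δ{p,q} is faithful. -/

import Mathlib

open Real

noncomputable def sigmaX (η : ℝ) : Matrix (Fin 3) (Fin 3) ℝ :=
  !![-1, 2*η, 0; 0, 1, 0; 0, 0, 1]

noncomputable def sigmaY (η ζ : ℝ) : Matrix (Fin 3) (Fin 3) ℝ :=
  !![1, 0, 0; 2*η, -1, 2*ζ; 0, 0, 1]

noncomputable def sigmaZ (ζ : ℝ) : Matrix (Fin 3) (Fin 3) ℝ :=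
  !![1, 0, 0; 0, 1, 0; 0, 2*ζ, -1]

/-- The relator set of the triangle group
`Δ{p,q} = ⟨x,y,z | x², y², z², (xy)^p, (yz)^q, (zx)²⟩`,
with generators indexed by `Fin 3` (`0 ↦ x`, `1 ↦ y`, `2 ↦ z`). -/
def triangleRels (p q : ℕ) : Set (FreeGroup (Fin 3)) :=
  {FreeGroup.of 0 ^ 2, FreeGroup.of 1 ^ 2, FreeGroup.of 2 ^ 2,
   (FreeGroup.of 0 * FreeGroup.of 1) ^ p,
   (FreeGroup.of 1 * FreeGroup.of 2) ^ q,
   (FreeGroup.of 2 * FreeGroup.of 0) ^ 2}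

section TitsArgument

open CoxeterSystem Matrix

set_option linter.unusedSectionVars false



variable {B : Type*} [DecidableEq B] {W : Type*} [Group W]
  {M : CoxeterMatrix B} (cs : CoxeterSystem M W)

local prefix:100 "s" => cs.simple
local prefix:100 "π" => cs.wordProd
local prefix:100 "ℓ" => cs.length

/-- Every word in two letters `i ≠ j` has the same product as some alternating word
of no greater length, of length at most `M i j`. -/
theorem word_to_alt {i j : B} (hij : i ≠ j) (hm : M i j ≠ 0) :
    ∀ ω : List B, (∀ l ∈ ω, l = i ∨ l = j) →
    ∃ (k : ℕ) (a b : B), k ≤ ω.length ∧ k ≤ M i j ∧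
      ((a = i ∧ b = j) ∨ (a = j ∧ b = i)) ∧ π ω = π (alternatingWord a b k) := by
  intro ω
  induction ω with
  | nil => exact fun _ => ⟨0, i, j, by simp, Nat.zero_le _, Or.inl ⟨rfl, rfl⟩, by
      simp [alternatingWord]⟩
  | cons l ω' ih =>
    intro hlet
    obtain ⟨k, a, b, hk1, hk2, hab, hprod⟩ := ih (fun x hx => hlet x (List.mem_cons_of_mem _ hx))
    have hl : l = i ∨ l = j := hlet l List.mem_cons_self
    have hab' : a ≠ b := by rcases hab with ⟨rfl, rfl⟩ | ⟨rfl, rfl⟩ <;> simp [hij, hij.symm]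
    have hMab : M a b = M i j := by
      rcases hab with ⟨rfl, rfl⟩ | ⟨rfl, rfl⟩
      · rfl
      · exact M.symmetric _ _
    have hla : l = a ∨ l = b := by
      rcases hab with ⟨rfl, rfl⟩ | ⟨rfl, rfl⟩ <;> tauto
    have hcons : π (l :: ω') = s l * π (alternatingWord a b k) := by
      rw [cs.wordProd_cons, hprod]
    by_cases hext : l = (if Even k then b else a)
    · -- extend the alternating word
      have hgrow : π (l :: ω') = π (alternatingWord a b (k + 1)) := by
        rw [cs.wordProd_cons, hprod, alternatingWord_succ', cs.wordProd_cons, hext]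
      by_cases hbig : k + 1 ≤ M i j
      · exact ⟨k + 1, a, b, by simpa using Nat.succ_le_succ hk1, hbig, hab, hgrow⟩
      · -- k + 1 = M i j + 1 : use the braid relation to flip
        have hkM : k = M i j := le_antisymm hk2 (Nat.lt_succ_iff.mp (Nat.lt_of_not_le hbig))
        have h2m : k + 1 ≤ M a b * 2 := by
          rw [hMab, ← hkM]; omega
        have := cs.prod_alternatingWord_eq_prod_alternatingWord_sub a b (k + 1) h2m
        have hsub : M a b * 2 - (k + 1) = k - 1 := by rw [hMab, ← hkM]; omega
        rw [hsub] at this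
        refine ⟨k - 1, b, a, ?_, ?_, ?_, by rw [hgrow, this]⟩
        · simp only [List.length_cons]; omega
        · omega
        · tauto
    · -- cancel with the head letter
      rcases Nat.eq_zero_or_pos k with hk0 | hkpos
      · -- k = 0 : the word is s l alone; re-choose orientation
        subst hk0
        simp only [if_pos (Even.zero)] at hext
        have hla' : l = a := by rcases hla with h | h; exact h; exact absurd h hext
        refine ⟨1, b, a, by simp, by omega, by tauto, ?_⟩
        rw [hcons, hla']
        have h1 : alternatingWord b a 1 = [a] := rfl
        rw [h1, cs.wordProd_singleton]
        have h0 : alternatingWord a b 0 = [] := rfl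
        rw [h0, cs.wordProd_nil, mul_one]
      · obtain ⟨k', rfl⟩ : ∃ k', k = k' + 1 := ⟨k - 1, by omega⟩
        have hhead : (if Even k' then b else a) = l := by
          by_cases he : Even k'
          · simp only [if_pos he]
            have hne : ¬ Even (k' + 1) := by simp [Nat.even_add_one, he]
            rw [if_neg hne] at hext
            rcases hla with rfl | rfl
            · exact absurd rfl hext
            · rfl
          · simp only [if_neg he]
            have hne : Even (k' + 1) := by simp [Nat.even_add_one, he]
            rw [if_pos hne] at hext
            rcases hla with rfl | rfl
            · rfl
            · exact absurd rfl hext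
        have hfin : π (l :: ω') = π (alternatingWord a b k') := by
          rw [hcons, alternatingWord_succ', hhead, cs.wordProd_cons,
            cs.simple_mul_simple_cancel_left]
        exact ⟨k', a, b, by simp only [List.length_cons]; omega, by omega, hab, hfin⟩

/-- Reduction of `w` to a coset representative with no right descent in `{i, j}`. -/
theorem coset_reduce (i j : B) :
    ∀ n (w : W), ℓ w = n → ∃ (u : W) (ω : List B), (∀ l ∈ ω, l = i ∨ l = j) ∧
      w = u * π ω ∧ ℓ u + ω.length ≤ ℓ w ∧
      ¬cs.IsRightDescent u i ∧ ¬cs.IsRightDescent u j := by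
  intro n
  induction n using Nat.strong_induction_on with
  | _ n ih =>
    intro w hw
    by_cases hdi : cs.IsRightDescent w i
    · obtain ⟨u, ω, hlet, hmul, hlen, hui, huj⟩ :=
        ih (ℓ (w * s i)) (hw ▸ hdi) (w * s i) rfl
      refine ⟨u, ω.concat i, ?_, ?_, ?_, hui, huj⟩
      · intro l hl
        simp only [List.concat_eq_append, List.mem_append, List.mem_singleton] at hl
        rcases hl with h | h
        · exact hlet l h
        · left; exact h
      · rw [cs.wordProd_concat, ← mul_assoc, ← hmul, cs.simple_mul_simple_cancel_right]
      · have : ℓ (w * s i) < ℓ w := hdi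
        simp only [List.length_concat]
        omega
    · by_cases hdj : cs.IsRightDescent w j
      · obtain ⟨u, ω, hlet, hmul, hlen, hui, huj⟩ :=
          ih (ℓ (w * s j)) (hw ▸ hdj) (w * s j) rfl
        refine ⟨u, ω.concat j, ?_, ?_, ?_, hui, huj⟩
        · intro l hl
          simp only [List.concat_eq_append, List.mem_append, List.mem_singleton] at hl
          rcases hl with h | h
          · exact hlet l h
          · right; exact h
        · rw [cs.wordProd_concat, ← mul_assoc, ← hmul, cs.simple_mul_simple_cancel_right]
        · have : ℓ (w * s j) < ℓ w := hdj
          simp only [List.length_concat]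
          omega
      · exact ⟨w, [], by simp, by simp, by simp, hdi, hdj⟩


variable [Fintype B]

private theorem sin_rec (θ : ℝ) (x : ℝ) :
    Real.sin ((x + 1 + 1) * θ) = 2 * Real.cos θ * Real.sin ((x + 1) * θ) - Real.sin (x * θ) := by
  have e1 : (x + 1 + 1) * θ = (x + 1) * θ + θ := by ring
  have e2 : x * θ = (x + 1) * θ - θ := by ring
  rw [e1, Real.sin_add, e2, Real.sin_sub]
  ring

theorem alt_formula (ψ : W →* Matrix B B ℝ) (i j : B) (θ : ℝ)
    (hsi : ψ (s i) *ᵥ Pi.single i 1 = -(Pi.single i 1))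
    (hsj : ψ (s j) *ᵥ Pi.single j 1 = -(Pi.single j 1))
    (hji : ψ (s j) *ᵥ Pi.single i 1 = (Pi.single i 1 : B → ℝ) + (2 * Real.cos θ) • (Pi.single j 1 : B → ℝ))
    (hij : ψ (s i) *ᵥ Pi.single j 1 = (Pi.single j 1 : B → ℝ) + (2 * Real.cos θ) • (Pi.single i 1 : B → ℝ)) :
    ∀ k : ℕ, Real.sin θ • (ψ (π (alternatingWord i j k)) *ᵥ Pi.single i 1) =
      if Even k then
        Real.sin ((k + 1) * θ) • (Pi.single i 1 : B → ℝ) + Real.sin (k * θ) • (Pi.single j 1 : B → ℝ)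
      else
        Real.sin (k * θ) • (Pi.single i 1 : B → ℝ) + Real.sin ((k + 1) * θ) • (Pi.single j 1 : B → ℝ) := by
  intro k
  induction k with
  | zero =>
    have h0 : alternatingWord i j 0 = ([] : List B) := rfl
    rw [h0, cs.wordProd_nil, _root_.map_one, Matrix.one_mulVec]
    simp
  | succ k ih =>
    have hw : π (alternatingWord i j (k + 1)) =
        s (if Even k then j else i) * π (alternatingWord i j k) := by
      rw [alternatingWord_succ', cs.wordProd_cons]
    rw [hw, _root_.map_mul, ← Matrix.mulVec_mulVec, ← Matrix.mulVec_smul, ih]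
    by_cases he : Even k
    · have ho : ¬ Even (k + 1) := by simp [Nat.even_add_one, he]
      rw [if_pos he, if_pos he, if_neg ho, Matrix.mulVec_add, Matrix.mulVec_smul,
        Matrix.mulVec_smul, hji, hsj]
      push_cast
      rw [sin_rec θ (k : ℝ)]
      module
    · have ho : Even (k + 1) := by simp [Nat.even_add_one, he]
      rw [if_neg he, if_neg he, if_pos ho, Matrix.mulVec_add, Matrix.mulVec_smul,
        Matrix.mulVec_smul, hij, hsi]
      push_cast
      rw [sin_rec θ (k : ℝ)]
      module

theorem key_pos (ψ : W →* Matrix B B ℝ)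
    (hM0 : ∀ i j : B, i ≠ j → M i j ≠ 0)
    (hs : ∀ i : B, ψ (s i) *ᵥ Pi.single i 1 = -(Pi.single i 1))
    (hst : ∀ i j : B, i ≠ j → ψ (s j) *ᵥ Pi.single i 1 =
      (Pi.single i 1 : B → ℝ) + (2 * Real.cos (Real.pi / (M i j : ℝ))) • (Pi.single j 1 : B → ℝ)) :
    ∀ n (w : W), ℓ w = n → ∀ i : B, ¬cs.IsRightDescent w i →
      ∀ l : B, 0 ≤ (ψ w *ᵥ Pi.single i 1) l := by
  intro n
  induction n using Nat.strong_induction_on with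
  | _ n ih =>
    intro w hw i hi l
    by_cases hw1 : w = 1
    · subst hw1
      rw [_root_.map_one, Matrix.one_mulVec, Pi.single_apply]
      positivity
    · obtain ⟨j, hj⟩ := cs.exists_rightDescent_of_ne_one hw1
      have hij : i ≠ j := fun h => hi (h ▸ hj)
      obtain ⟨u, ω, hlet, hmul, hlen, hui, huj⟩ := coset_reduce cs i j (ℓ w) w rfl
      obtain ⟨k, a, b, hk1, hk2, hab, hprod⟩ := word_to_alt cs hij (hM0 i j hij) ω hlet
      have hw_eq : w = u * π (alternatingWord a b k) := by rw [hmul, hprod]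
      have hune : u ≠ w := fun h => huj (h ▸ hj)
      rcases Nat.eq_zero_or_pos k with hk0 | hkpos
      · exfalso
        apply hune
        subst hk0
        have h0 : alternatingWord a b 0 = ([] : List B) := rfl
        rw [h0, cs.wordProd_nil, mul_one] at hw_eq
        exact hw_eq.symm
      · -- auxiliary: a word ending in `i` of length `k` yields a contradiction
        have hdescent : ∀ k' : ℕ, k' + 1 ≤ ω.length →
            π (alternatingWord a b k) = π (alternatingWord j i (k' + 1)) → False := by
          intro k' hk' hflip
          have hsucc : alternatingWord j i (k' + 1) = (alternatingWord i j k').concat i :=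
            alternatingWord_succ j i k'
          have hws : w * s i = u * π (alternatingWord i j k') := by
            rw [hw_eq, hflip, hsucc, cs.wordProd_concat, mul_assoc,
              cs.simple_mul_simple_cancel_right]
          apply hi
          show ℓ (w * s i) < ℓ w
          calc ℓ (w * s i) = ℓ (u * π (alternatingWord i j k')) := by rw [hws]
            _ ≤ ℓ u + ℓ (π (alternatingWord i j k')) := cs.length_mul_le _ _
            _ ≤ ℓ u + k' := by
                have := cs.length_wordProd_le (alternatingWord i j k')
                rw [length_alternatingWord] at this
                omega
            _ < ℓ u + ω.length := by omega
            _ ≤ ℓ w := hlen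
        rcases hab with ⟨ha, hb⟩ | ⟨ha, hb⟩
        · -- a = i, b = j
          rw [ha, hb] at hw_eq hdescent
          by_cases hkm : k = M i j
          · -- flip using the braid relation, then the word ends in i
            exfalso
            have h2m : k ≤ M i j * 2 := by omega
            have hflip := cs.prod_alternatingWord_eq_prod_alternatingWord_sub i j k h2m
            have hsub : M i j * 2 - k = (k - 1) + 1 := by omega
            rw [hsub] at hflip
            exact hdescent (k - 1) (by omega) hflip
          · -- the genuinely dihedral positive case
            have hm2 : 2 ≤ M i j := by
              have h1 := M.off_diagonal i j hij
              have h0 := hM0 i j hij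
              omega
            have hklt : k + 1 ≤ M i j := by omega
            set θ := Real.pi / (M i j : ℝ) with hθ
            have hmpos : (0 : ℝ) < (M i j : ℝ) := by positivity
            have hθpos : 0 < θ := by positivity
            have hθlt : θ < Real.pi := by
              rw [hθ]
              apply div_lt_self Real.pi_pos
              exact_mod_cast by omega
            have hsθ : 0 < Real.sin θ := Real.sin_pos_of_pos_of_lt_pi hθpos hθlt
            have hcoef : ∀ r : ℕ, r ≤ M i j → 0 ≤ Real.sin ((r : ℝ) * θ) := by
              intro r hr
              apply Real.sin_nonneg_of_nonneg_of_le_pi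
              · positivity
              · rw [hθ]
                rw [mul_div_assoc'] -- maybe not needed
                calc (r : ℝ) * Real.pi / (M i j : ℝ) ≤ (M i j : ℝ) * Real.pi / (M i j : ℝ) := by
                      apply div_le_div_of_nonneg_right ?_ hmpos.le
                      exact mul_le_mul_of_nonneg_right (by exact_mod_cast hr) Real.pi_pos.le
                  _ = Real.pi := by field_simp
            have hij' : ψ (s i) *ᵥ Pi.single j 1 =
                (Pi.single j 1 : B → ℝ) + (2 * Real.cos θ) • (Pi.single i 1 : B → ℝ) := by
              have := hst j i (Ne.symm hij)
              rwa [show ((M j i : ℕ) : ℝ) = ((M i j : ℕ) : ℝ) from congrArg (Nat.cast : ℕ → ℝ) (M.symmetric j i)]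
                at this
            have hform := alt_formula cs ψ i j θ (hs i) (hs j)
              (by rw [hθ] at *; exact hst i j hij) hij' k
            -- length facts for the induction
            have hlu : ℓ u < n := by
              have : ℓ u + ω.length ≤ n := hw ▸ hlen
              omega
            have h1 : ∀ l', 0 ≤ (ψ u *ᵥ Pi.single i 1) l' := fun l' => ih _ hlu u rfl i hui l'
            have h2 : ∀ l', 0 ≤ (ψ u *ᵥ Pi.single j 1) l' := fun l' => ih _ hlu u rfl j huj l'
            have hvec : Real.sin θ • (ψ w *ᵥ Pi.single i 1) =
                ψ u *ᵥ (Real.sin θ • (ψ (π (alternatingWord i j k)) *ᵥ Pi.single i 1)) := by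
              rw [hw_eq, _root_.map_mul, ← Matrix.mulVec_mulVec, Matrix.mulVec_smul]
            rw [hform] at hvec
            have hc1 : 0 ≤ Real.sin ((k : ℝ) * θ) := hcoef k (by omega)
            have hc2 : 0 ≤ Real.sin (((k : ℝ) + 1) * θ) := by
              have := hcoef (k + 1) hklt
              push_cast at this
              exact this
            have hkey : 0 ≤ (Real.sin θ • (ψ w *ᵥ Pi.single i 1)) l := by
              rw [hvec]
              by_cases he : Even k
              · rw [if_pos he, Matrix.mulVec_add, Matrix.mulVec_smul, Matrix.mulVec_smul]
                simp only [Pi.add_apply, Pi.smul_apply, smul_eq_mul]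
                have := h1 l; have := h2 l
                positivity
              · rw [if_neg he, Matrix.mulVec_add, Matrix.mulVec_smul, Matrix.mulVec_smul]
                simp only [Pi.add_apply, Pi.smul_apply, smul_eq_mul]
                have := h1 l; have := h2 l
                positivity
            simp only [Pi.smul_apply, smul_eq_mul] at hkey
            by_contra hneg
            push_neg at hneg
            nlinarith [mul_pos hsθ (show (0:ℝ) < -((ψ w *ᵥ Pi.single i 1) l) by linarith)]
        · -- a = j, b = i : the word ends in i, contradiction
          rw [ha, hb] at hw_eq hdescent
          exfalso
          obtain ⟨k', rfl⟩ : ∃ k', k = k' + 1 := ⟨k - 1, by omega⟩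
          exact hdescent k' (by omega) rfl

theorem rep_faithful (ψ : W →* Matrix B B ℝ)
    (hM0 : ∀ i j : B, i ≠ j → M i j ≠ 0)
    (hs : ∀ i : B, ψ (s i) *ᵥ Pi.single i 1 = -(Pi.single i 1))
    (hst : ∀ i j : B, i ≠ j → ψ (s j) *ᵥ Pi.single i 1 =
      (Pi.single i 1 : B → ℝ) + (2 * Real.cos (Real.pi / (M i j : ℝ))) • (Pi.single j 1 : B → ℝ))
    (w : W) (hψ : ψ w = 1) : w = 1 := by
  by_contra hw1
  obtain ⟨j, hj⟩ := cs.exists_rightDescent_of_ne_one hw1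
  have hnd : ¬cs.IsRightDescent (w * s j) j := by
    unfold CoxeterSystem.IsRightDescent at hj ⊢
    rw [cs.simple_mul_simple_cancel_right]
    omega
  have hpos := key_pos cs ψ hM0 hs hst (ℓ (w * s j)) (w * s j) rfl j hnd j
  rw [_root_.map_mul, hψ, one_mul, hs j] at hpos
  simp [Pi.single_apply] at hpos
  linarith



def triCM (p q : ℕ) (hp : 2 ≤ p) (hq : 2 ≤ q) : CoxeterMatrix (Fin 3) where
  M := !![1, p, 2; p, 1, q; 2, q, 1]
  isSymm := by
    show Matrix.transpose _ = _
    ext i j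
    fin_cases i <;> fin_cases j <;> rfl
  diagonal := by intro i; fin_cases i <;> rfl
  off_diagonal := by
    intro i j h
    fin_cases i <;> fin_cases j <;> simp_all <;> omega



theorem lift_rels_cox (p q : ℕ) (hp : 2 ≤ p) (hq : 2 ≤ q) :
    ∀ r ∈ triangleRels p q,
      FreeGroup.lift (fun i => (triCM p q hp hq).simple i) r = 1 := by
  intro r hr
  set cs0 := (triCM p q hp hq).toCoxeterSystem
  have hsimp : ∀ i, (triCM p q hp hq).simple i = cs0.simple i := fun _ => rfl
  simp only [triangleRels, Set.mem_insert_iff, Set.mem_singleton_iff] at hr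
  rcases hr with rfl | rfl | rfl | rfl | rfl | rfl
  · rw [map_pow, FreeGroup.lift_apply_of, hsimp]; exact cs0.simple_sq 0
  · rw [map_pow, FreeGroup.lift_apply_of, hsimp]; exact cs0.simple_sq 1
  · rw [map_pow, FreeGroup.lift_apply_of, hsimp]; exact cs0.simple_sq 2
  · rw [map_pow, _root_.map_mul, FreeGroup.lift_apply_of, FreeGroup.lift_apply_of, hsimp, hsimp]
    exact cs0.simple_mul_simple_pow 0 1
  · rw [map_pow, _root_.map_mul, FreeGroup.lift_apply_of, FreeGroup.lift_apply_of, hsimp, hsimp]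
    exact cs0.simple_mul_simple_pow 1 2
  · rw [map_pow, _root_.map_mul, FreeGroup.lift_apply_of, FreeGroup.lift_apply_of, hsimp, hsimp]
    exact cs0.simple_mul_simple_pow 2 0

theorem lift_cox_rels (p q : ℕ) (hp : 2 ≤ p) (hq : 2 ≤ q) :
    ∀ r ∈ (triCM p q hp hq).relationsSet,
      FreeGroup.lift (fun i => (PresentedGroup.of i : PresentedGroup (triangleRels p q))) r = 1 := by
  have hmk : ∀ r ∈ triangleRels p q, PresentedGroup.mk (triangleRels p q) r = 1 := fun r hr =>
    (QuotientGroup.eq_one_iff r).mpr (Subgroup.subset_normalClosure hr)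
  set X : Fin 3 → PresentedGroup (triangleRels p q) := PresentedGroup.of with hX
  have h0 : X 0 * X 0 = 1 := by
    have := hmk _ (show FreeGroup.of 0 ^ 2 ∈ triangleRels p q by simp [triangleRels])
    rw [map_pow] at this; rwa [← pow_two]
  have h1 : X 1 * X 1 = 1 := by
    have := hmk _ (show FreeGroup.of 1 ^ 2 ∈ triangleRels p q by simp [triangleRels])
    rw [map_pow] at this; rwa [← pow_two]
  have h2 : X 2 * X 2 = 1 := by
    have := hmk _ (show FreeGroup.of 2 ^ 2 ∈ triangleRels p q by simp [triangleRels])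
    rw [map_pow] at this; rwa [← pow_two]
  have hxy : (X 0 * X 1) ^ p = 1 := by
    have := hmk _ (show (FreeGroup.of 0 * FreeGroup.of 1) ^ p ∈ triangleRels p q by
      simp [triangleRels])
    rwa [map_pow, _root_.map_mul] at this
  have hyz : (X 1 * X 2) ^ q = 1 := by
    have := hmk _ (show (FreeGroup.of 1 * FreeGroup.of 2) ^ q ∈ triangleRels p q by
      simp [triangleRels])
    rwa [map_pow, _root_.map_mul] at this
  have hzx : (X 2 * X 0) ^ 2 = 1 := by
    have := hmk _ (show (FreeGroup.of 2 * FreeGroup.of 0) ^ 2 ∈ triangleRels p q by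
      simp [triangleRels])
    rwa [map_pow, _root_.map_mul] at this
  have flip : ∀ (a b : PresentedGroup (triangleRels p q)) (n : ℕ),
      (a * b) ^ n = 1 → (b * a) ^ n = 1 := by
    intro a b n h
    have : b * a = b * (a * b) * b⁻¹ := by group
    rw [this, conj_pow, h, mul_one, mul_inv_cancel]
  rintro r ⟨⟨i, j⟩, rfl⟩
  show FreeGroup.lift _ ((FreeGroup.of i * FreeGroup.of j) ^ (triCM p q hp hq) i j) = 1
  rw [map_pow, _root_.map_mul, FreeGroup.lift_apply_of, FreeGroup.lift_apply_of]
  fin_cases i <;> fin_cases j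
  · show (X 0 * X 0) ^ (1 : ℕ) = 1; rw [pow_one]; exact h0
  · show (X 0 * X 1) ^ p = 1; exact hxy
  · show (X 0 * X 2) ^ (2 : ℕ) = 1; exact flip _ _ _ hzx
  · show (X 1 * X 0) ^ p = 1; exact flip _ _ _ hxy
  · show (X 1 * X 1) ^ (1 : ℕ) = 1; rw [pow_one]; exact h1
  · show (X 1 * X 2) ^ q = 1; exact hyz
  · show (X 2 * X 0) ^ (2 : ℕ) = 1; exact hzx
  · show (X 2 * X 1) ^ q = 1; exact flip _ _ _ hyz
  · show (X 2 * X 2) ^ (1 : ℕ) = 1; rw [pow_one]; exact h2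

noncomputable def triEquiv (p q : ℕ) (hp : 2 ≤ p) (hq : 2 ≤ q) :
    PresentedGroup (triangleRels p q) ≃* (triCM p q hp hq).Group :=
  MonoidHom.toMulEquiv
    (PresentedGroup.toGroup (lift_rels_cox p q hp hq))
    (PresentedGroup.toGroup (lift_cox_rels p q hp hq))
    (by
      apply PresentedGroup.ext
      intro x
      simp only [MonoidHom.comp_apply, MonoidHom.id_apply, PresentedGroup.toGroup.of]
      show PresentedGroup.toGroup (lift_cox_rels p q hp hq) (PresentedGroup.of x) = _
      rw [PresentedGroup.toGroup.of])
    (by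
      apply PresentedGroup.ext (rels := (triCM p q hp hq).relationsSet)
      intro x
      rfl)

noncomputable def triCS (p q : ℕ) (hp : 2 ≤ p) (hq : 2 ≤ q) :
    CoxeterSystem (triCM p q hp hq) (PresentedGroup (triangleRels p q)) :=
  ⟨triEquiv p q hp hq⟩

theorem triCS_simple (p q : ℕ) (hp : 2 ≤ p) (hq : 2 ≤ q) (i : Fin 3) :
    (triCS p q hp hq).simple i = PresentedGroup.of i := by
  show (triEquiv p q hp hq).symm (PresentedGroup.of i) = _
  show PresentedGroup.toGroup (lift_cox_rels p q hp hq) (PresentedGroup.of i) = _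
  rw [PresentedGroup.toGroup.of]


theorem triangle_group_geometric_representation_faithful
    (p q : ℕ) (hp : 2 ≤ p) (hq : 2 ≤ q)
    (η ζ : ℝ) (hη : η = Real.cos (π / p)) (hζ : ζ = Real.cos (π / q))
    (gx gy gz : GL (Fin 3) ℝ)
    (hgx : (gx : Matrix (Fin 3) (Fin 3) ℝ) = sigmaX η)
    (hgy : (gy : Matrix (Fin 3) (Fin 3) ℝ) = sigmaY η ζ)
    (hgz : (gz : Matrix (Fin 3) (Fin 3) ℝ) = sigmaZ ζ)
    (φ : PresentedGroup (triangleRels p q) →* GL (Fin 3) ℝ)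
    (hφx : φ (PresentedGroup.of 0) = gx)
    (hφy : φ (PresentedGroup.of 1) = gy)
    (hφz : φ (PresentedGroup.of 2) = gz) :
    Function.Injective φ := by
  set cs := triCS p q hp hq with hcs
  set ψ : PresentedGroup (triangleRels p q) →* Matrix (Fin 3) (Fin 3) ℝ :=
    (Units.coeHom (Matrix (Fin 3) (Fin 3) ℝ)).comp φ with hψdef
  have e0 : ψ (cs.simple 0) = sigmaX η := by
    rw [hcs, triCS_simple]
    show ((φ (PresentedGroup.of 0) : GL (Fin 3) ℝ) : Matrix (Fin 3) (Fin 3) ℝ) = _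
    rw [hφx]; exact hgx
  have e1 : ψ (cs.simple 1) = sigmaY η ζ := by
    rw [hcs, triCS_simple]
    show ((φ (PresentedGroup.of 1) : GL (Fin 3) ℝ) : Matrix (Fin 3) (Fin 3) ℝ) = _
    rw [hφy]; exact hgy
  have e2 : ψ (cs.simple 2) = sigmaZ ζ := by
    rw [hcs, triCS_simple]
    show ((φ (PresentedGroup.of 2) : GL (Fin 3) ℝ) : Matrix (Fin 3) (Fin 3) ℝ) = _
    rw [hφz]; exact hgz
  have hM0 : ∀ i j : Fin 3, i ≠ j → (triCM p q hp hq) i j ≠ 0 := by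
    intro i j hij
    fin_cases i <;> fin_cases j <;>
      first
        | exact absurd rfl hij
        | exact (show p ≠ 0 by omega)
        | exact (show q ≠ 0 by omega)
        | exact (show (2 : ℕ) ≠ 0 by omega)
  have hcos2 : Real.cos (Real.pi / ((2 : ℕ) : ℝ)) = 0 := by
    norm_num [Real.cos_pi_div_two]
  have hs : ∀ i : Fin 3, ψ (cs.simple i) *ᵥ Pi.single i 1 = -(Pi.single i 1) := by
    intro i
    fin_cases i
    · show ψ (cs.simple 0) *ᵥ Pi.single 0 1 = -(Pi.single 0 1)
      rw [e0]; funext l; fin_cases l <;> simp [sigmaX, Pi.single_apply, Matrix.vecHead, Matrix.vecTail, Function.comp]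
    · show ψ (cs.simple 1) *ᵥ Pi.single 1 1 = -(Pi.single 1 1)
      rw [e1]; funext l; fin_cases l <;> simp [sigmaY, Pi.single_apply, Matrix.vecHead, Matrix.vecTail, Function.comp]
    · show ψ (cs.simple 2) *ᵥ Pi.single 2 1 = -(Pi.single 2 1)
      rw [e2]; funext l; fin_cases l <;> simp [sigmaZ, Pi.single_apply, Matrix.vecHead, Matrix.vecTail, Function.comp]
  have hst : ∀ i j : Fin 3, i ≠ j → ψ (cs.simple j) *ᵥ Pi.single i 1 =
      (Pi.single i 1 : Fin 3 → ℝ) +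
        (2 * Real.cos (Real.pi / ((triCM p q hp hq) i j : ℝ))) • (Pi.single j 1 : Fin 3 → ℝ) := by
    intro i j hij
    fin_cases i <;> fin_cases j
    · simp at hij
    · -- (0,1) : coefficient cos (π / p) = η
      show ψ (cs.simple 1) *ᵥ Pi.single 0 1 = (Pi.single 0 1 : Fin 3 → ℝ) +
        (2 * Real.cos (Real.pi / ((p : ℕ) : ℝ))) • (Pi.single 1 1 : Fin 3 → ℝ)
      rw [e1, ← hη]
      funext l; fin_cases l <;> simp [sigmaY, Pi.single_apply, Matrix.vecHead, Matrix.vecTail, Function.comp]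
    · -- (0,2) : coefficient cos (π / 2) = 0
      show ψ (cs.simple 2) *ᵥ Pi.single 0 1 = (Pi.single 0 1 : Fin 3 → ℝ) +
        (2 * Real.cos (Real.pi / ((2 : ℕ) : ℝ))) • (Pi.single 2 1 : Fin 3 → ℝ)
      rw [e2, hcos2]
      funext l; fin_cases l <;> simp [sigmaZ, Pi.single_apply, Matrix.vecHead, Matrix.vecTail, Function.comp]
    · -- (1,0)
      show ψ (cs.simple 0) *ᵥ Pi.single 1 1 = (Pi.single 1 1 : Fin 3 → ℝ) +
        (2 * Real.cos (Real.pi / ((p : ℕ) : ℝ))) • (Pi.single 0 1 : Fin 3 → ℝ)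
      rw [e0, ← hη]
      funext l; fin_cases l <;> simp [sigmaX, Pi.single_apply, Matrix.vecHead, Matrix.vecTail, Function.comp]
    · simp at hij
    · -- (1,2)
      show ψ (cs.simple 2) *ᵥ Pi.single 1 1 = (Pi.single 1 1 : Fin 3 → ℝ) +
        (2 * Real.cos (Real.pi / ((q : ℕ) : ℝ))) • (Pi.single 2 1 : Fin 3 → ℝ)
      rw [e2, ← hζ]
      funext l; fin_cases l <;> simp [sigmaZ, Pi.single_apply, Matrix.vecHead, Matrix.vecTail, Function.comp]
    · -- (2,0)
      show ψ (cs.simple 0) *ᵥ Pi.single 2 1 = (Pi.single 2 1 : Fin 3 → ℝ) +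
        (2 * Real.cos (Real.pi / ((2 : ℕ) : ℝ))) • (Pi.single 0 1 : Fin 3 → ℝ)
      rw [e0, hcos2]
      funext l; fin_cases l <;> simp [sigmaX, Pi.single_apply, Matrix.vecHead, Matrix.vecTail, Function.comp]
    · -- (2,1)
      show ψ (cs.simple 1) *ᵥ Pi.single 2 1 = (Pi.single 2 1 : Fin 3 → ℝ) +
        (2 * Real.cos (Real.pi / ((q : ℕ) : ℝ))) • (Pi.single 1 1 : Fin 3 → ℝ)
      rw [e1, ← hζ]
      funext l; fin_cases l <;> simp [sigmaY, Pi.single_apply, Matrix.vecHead, Matrix.vecTail, Function.comp]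
    · simp at hij
  rw [injective_iff_map_eq_one]
  intro w hw
  exact rep_faithful cs ψ hM0 hs hst w
    (by rw [hψdef, MonoidHom.comp_apply, hw, Units.coeHom_apply, Units.val_one])

end TitsArgument
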